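/- Let A(ω₁) denote the one-point compactification of a discrete space of cardinality ℵ₁. The Alexandroff duplicate AD(A(ω₁)^ω) of the countable product A(ω₁)^ω is not NY-Valdivia. -/

import Mathlib

open Topology Set

universe u v

/-- A space is *M-scattered* if every nonempty subspace contains a nonempty
relatively open second-countable subset. -/
def MScattered (X : Type*) [TopologicalSpace X] : Prop :=
  ∀ A : Set X, A.Nonempty → ∃ U : Set X, IsOpen U ∧ (A ∩ U).Nonempty ∧
    SecondCountableTopology ↥(A ∩ U)

/-- Corson compact: embeds into the Σ-product of copies of `[0,1]`. -/
def CorsonCompact (K : Type u) [TopologicalSpace K] : Prop :=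
  ∃ (Γ : Type u) (f : K → Γ → unitInterval),
    Topology.IsEmbedding f ∧ ∀ k, {γ | f k γ ≠ 0}.Countable

/-- Eberlein compact: embeds into `c₀(Γ)`. -/
def EberleinCompact (K : Type u) [TopologicalSpace K] : Prop :=
  ∃ (Γ : Type u) (f : K → Γ → unitInterval),
    Topology.IsEmbedding f ∧ ∀ k, ∀ ε : ℝ, 0 < ε → {γ | ε < (f k γ : ℝ)}.Finite

/-- NY compact: embeds into a σ-product of compact metrizable spaces. -/
def NYCompact (K : Type u) [TopologicalSpace K] : Prop :=
  ∃ (Γ : Type u) (X : Γ → Type u) (t : ∀ γ, TopologicalSpace (X γ)),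
    (∀ γ, @CompactSpace (X γ) (t γ)) ∧
    (∀ γ, @TopologicalSpace.MetrizableSpace (X γ) (t γ)) ∧
    ∃ (a : ∀ γ, X γ) (f : K → ∀ γ, X γ),
      @Topology.IsEmbedding K (∀ γ, X γ) _ (@Pi.topologicalSpace Γ X t) f ∧
      ∀ k, {γ | f k γ ≠ a γ}.Finite

/-- ω-Corson compact: embeds into the σ-product of copies of `[0,1]`. -/
def OmegaCorson (K : Type u) [TopologicalSpace K] : Prop :=
  ∃ (Γ : Type u) (f : K → Γ → unitInterval),
    Topology.IsEmbedding f ∧ ∀ k, {γ | f k γ ≠ 0}.Finite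

/-- Semi-Eberlein: embeds into `[0,1]^Γ` with `h(K) ∩ c₀(Γ)` dense in `h(K)`. -/
def SemiEberlein (K : Type u) [TopologicalSpace K] : Prop :=
  ∃ (Γ : Type u) (h : K → Γ → unitInterval), Topology.IsEmbedding h ∧
    Set.range h ⊆
      closure (Set.range h ∩ {x | ∀ ε : ℝ, 0 < ε → {γ | ε < (x γ : ℝ)}.Finite})

/-- ω-Valdivia: embeds into `[0,1]^Γ` with `h(K) ∩ σ([0,1]^Γ)` dense in `h(K)`. -/
def OmegaValdivia (K : Type u) [TopologicalSpace K] : Prop :=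
  ∃ (Γ : Type u) (h : K → Γ → unitInterval), Topology.IsEmbedding h ∧
    Set.range h ⊆ closure (Set.range h ∩ {x | {γ | x γ ≠ 0}.Finite})

/-- NY-Valdivia: embeds into a product of Hilbert cubes with the σ-product trace dense. -/
def NYValdivia (K : Type u) [TopologicalSpace K] : Prop :=
  ∃ (Γ : Type u) (h : K → Γ → ℕ → unitInterval), Topology.IsEmbedding h ∧
    Set.range h ⊆ closure (Set.range h ∩ {x | {γ | x γ ≠ 0}.Finite})

/-- The topology of the Alexandroff duplicate on `X × Bool`: points `(x, true)` are
isolated, and basic neighborhoods of `(x, false)` are `(U × Bool) \ {(x, true)}`. -/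
def adTopology (X : Type*) [TopologicalSpace X] : TopologicalSpace (X × Bool) where
  IsOpen V := ∀ x : X, (x, false) ∈ V →
    ∃ U : Set X, IsOpen U ∧ x ∈ U ∧ {p : X × Bool | p.1 ∈ U ∧ p ≠ (x, true)} ⊆ V
  isOpen_univ := fun x _ => ⟨Set.univ, isOpen_univ, trivial, fun _ _ => trivial⟩
  isOpen_inter := by
    intro V W hV hW x hx
    obtain ⟨U1, hU1, hx1, hs1⟩ := hV x hx.1
    obtain ⟨U2, hU2, hx2, hs2⟩ := hW x hx.2
    exact ⟨U1 ∩ U2, hU1.inter hU2, ⟨hx1, hx2⟩,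
      fun p hp => ⟨hs1 ⟨hp.1.1, hp.2⟩, hs2 ⟨hp.1.2, hp.2⟩⟩⟩
  isOpen_sUnion := by
    intro S hS x hx
    obtain ⟨V, hVS, hxV⟩ := hx
    obtain ⟨U, hU, hxU, hsub⟩ := hS V hVS x hxV
    exact ⟨U, hU, hxU, fun p hp => ⟨V, hVS, hsub hp⟩⟩

/-- A space is metalindelöf if every open cover has a point-countable open refinement. -/
def Metalindelof (X : Type*) [TopologicalSpace X] : Prop :=
  ∀ 𝒰 : Set (Set X), (∀ U ∈ 𝒰, IsOpen U) → ⋃₀ 𝒰 = Set.univ →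
    ∃ 𝒱 : Set (Set X), (∀ V ∈ 𝒱, IsOpen V) ∧ ⋃₀ 𝒱 = Set.univ ∧
      (∀ V ∈ 𝒱, ∃ U ∈ 𝒰, V ⊆ U) ∧ ∀ x : X, {V ∈ 𝒱 | x ∈ V}.Countable

/-- Hereditarily metalindelöf: every subspace is metalindelöf. -/
def HereditarilyMetalindelof (X : Type*) [TopologicalSpace X] : Prop :=
  ∀ A : Set X, Metalindelof ↥A
section AuxNYV
set_option linter.unusedSectionVars false
open OnePoint

variable {D : Type} [TopologicalSpace D] [DiscreteTopology D]

/-- Characterization of open sets in the Alexandroff duplicate topology. -/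
lemma ad_isOpen_iff {Z : Type*} [TopologicalSpace Z] (s : Set (Z × Bool)) :
    IsOpen[adTopology Z] s ↔ ∀ x : Z, (x, false) ∈ s →
      ∃ U : Set Z, IsOpen U ∧ x ∈ U ∧ {p : Z × Bool | p.1 ∈ U ∧ p ≠ (x, true)} ⊆ s :=
  Iff.rfl

/-- Singletons at isolated (true) points are open in the duplicate. -/
lemma ad_isOpen_singleton_true {Z : Type*} [TopologicalSpace Z] (y : Z) :
    IsOpen[adTopology Z] {(y, true)} := by
  rw [ad_isOpen_iff]
  intro x hx
  exact absurd (congrArg Prod.snd hx) (by simp)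

/-- cofinite complements: an open set containing ∞ misses only finitely many `d`. -/
lemma finite_not_mem_of_isOpen_infty {V : Set (OnePoint D)} (hV : IsOpen V) (hVinf : (∞ : OnePoint D) ∈ V) :
    {e : D | (e : OnePoint D) ∉ V}.Finite := by
  have h := (OnePoint.isOpen_iff_of_mem' hVinf).1 hV
  have : {e : D | (e : OnePoint D) ∉ V} = ((fun e : D => (e : OnePoint D)) ⁻¹' V)ᶜ := rfl
  rw [this]
  exact h.1.finite_of_discrete

lemma isOpen_coe_singleton (d : D) : IsOpen {(d : OnePoint D)} := by
  rw [OnePoint.isOpen_iff_of_notMem (by simp [OnePoint.infty_ne_coe])]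
  exact isOpen_discrete _

/-- box extraction in the product space `ℕ → OnePoint D` -/
lemma box_extract {U : Set (ℕ → OnePoint D)} (hU : IsOpen U) {x : ℕ → OnePoint D} (hx : x ∈ U) :
    ∃ V : ℕ → Set (OnePoint D), (∀ j, IsOpen (V j) ∧ x j ∈ V j) ∧
      {y : ℕ → OnePoint D | ∀ j, y j ∈ V j} ⊆ U := by
  obtain ⟨I, u, hIu, hsub⟩ := isOpen_pi_iff.1 hU x hx
  classical
  refine ⟨fun j => if j ∈ I then u j else Set.univ, fun j => ?_, fun y hy => hsub ?_⟩
  · by_cases hj : j ∈ I <;> simp [hj]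
    exact hIu j hj
  · intro j hj
    have := hy j
    simpa [Finset.mem_coe.1 hj] using this

end AuxNYV
section AuxNYV2
open OnePoint
set_option linter.unusedSectionVars false

variable {D : Type} [TopologicalSpace D] [DiscreteTopology D] {Γ : Type}
variable {h : ((ℕ → OnePoint D) × Bool) → Γ → ℕ → unitInterval}

/-- isolated points land in any dense subset; here: finite support of images of
isolated points of the duplicate. -/
lemma isolated_finite_supp
    (hemb : @Topology.IsEmbedding ((ℕ → OnePoint D) × Bool) (Γ → ℕ → unitInterval)
      (adTopology (ℕ → OnePoint D)) _ h)
    (hdense : Set.range h ⊆ closure (Set.range h ∩ {x | {γ | x γ ≠ 0}.Finite}))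
    (y : ℕ → OnePoint D) : {γ | h (y, true) γ ≠ 0}.Finite := by
  letI : TopologicalSpace ((ℕ → OnePoint D) × Bool) := adTopology (ℕ → OnePoint D)
  obtain ⟨W, hWopen, hWpre⟩ :=
    hemb.toIsInducing.isOpen_iff.1 (ad_isOpen_singleton_true (Z := ℕ → OnePoint D) y)
  have hyW : h (y, true) ∈ W := by
    have : (y, true) ∈ h ⁻¹' W := by rw [hWpre]; rfl
    exact this
  obtain ⟨w, hwW, hwmem⟩ :=
    (mem_closure_iff.1 (hdense ⟨(y, true), rfl⟩)) W hWopen hyW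
  obtain ⟨⟨p, hp⟩, hfin⟩ := hwmem
  have hpW : p ∈ h ⁻¹' W := by
    simp only [Set.mem_preimage, hp]; exact hwW
  rw [hWpre] at hpW
  have : w = h (y, true) := by rw [← hp, hpW]
  rwa [this] at hfin

/-- A separated family in a product of Hilbert cubes whose members are supported
on a fixed finite set is countable. -/
lemma countable_of_separated_family {ι : Type} {Ps : Set Γ} (hPs : Ps.Finite)
    (v : ι → Γ → ℕ → unitInterval) (W : ι → Set (Γ → ℕ → unitInterval))
    (hWopen : ∀ i, IsOpen (W i)) (hvW : ∀ i, v i ∈ W i)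
    (hsep : ∀ i e, v e ∈ W i → e = i)
    (hsupp : ∀ i γ, γ ∉ Ps → v i γ = 0) : Countable ι := by
  classical
  haveI : Finite ↥Ps := hPs
  choose I u hIu hsub using fun i => isOpen_pi_iff.1 (hWopen i) (v i) (hvW i)
  set Y := (↥Ps → ℕ → unitInterval)
  let W' : ι → Set Y := fun i =>
    Set.pi Set.univ (fun γs => if (γs : Γ) ∈ I i then u i γs else Set.univ)
  have hW'open : ∀ i, IsOpen (W' i) := by
    intro i
    refine isOpen_set_pi Set.finite_univ (fun a _ => ?_)
    by_cases ha : (a : Γ) ∈ I i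
    · simpa [ha] using (hIu i a ha).1
    · simp [ha]
  let r : (Γ → ℕ → unitInterval) → Y := fun w γs => w γs
  have hrmem : ∀ i, r (v i) ∈ W' i := by
    intro i γs _
    by_cases ha : (γs : Γ) ∈ I i
    · simpa [ha] using (hIu i γs ha).2
    · simp [ha]
  have hrsep : ∀ i e, r (v e) ∈ W' i → e = i := by
    intro i e hmem
    refine hsep i e (hsub i ?_)
    intro γ hγ
    have hγ' : γ ∈ I i := hγ
    by_cases hgP : γ ∈ Ps
    · have := hmem ⟨γ, hgP⟩ (Set.mem_univ _)
      simpa [hγ'] using this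
    · rw [hsupp e γ hgP, ← hsupp i γ hgP]
      exact (hIu i γ hγ').2
  obtain ⟨b, hbc, -, hbasis⟩ := TopologicalSpace.exists_countable_basis Y
  have hchoice : ∀ i, ∃ c ∈ b, r (v i) ∈ c ∧ c ⊆ W' i := by
    intro i
    obtain ⟨c, hcb, hmem, hsubc⟩ :=
      hbasis.exists_subset_of_mem_open (hrmem i) (hW'open i)
    exact ⟨c, hcb, hmem, hsubc⟩
  choose c hcb hcmem hcsub using hchoice
  haveI := hbc.to_subtype
  have hinj : Function.Injective (fun i => (⟨c i, hcb i⟩ : ↥b)) := by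
    intro i j hij
    have hcc : c i = c j := congrArg Subtype.val hij
    exact (hrsep i j (hcsub i (hcc ▸ hcmem j))).symm
  exact Function.Injective.countable hinj

/-- the punctured separating open sets in the duplicate -/
lemma ad_isOpen_eval_ne (i : ℕ) (d : D) (w : ℕ → OnePoint D) :
    IsOpen[adTopology (ℕ → OnePoint D)]
      {p : (ℕ → OnePoint D) × Bool | p.1 i = (d : OnePoint D) ∧ p ≠ (w, true)} := by
  rw [ad_isOpen_iff]
  rintro x ⟨hxi, -⟩
  have hopen : IsOpen {y : ℕ → OnePoint D | y i = (d : OnePoint D)} := by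
    have heq : {y : ℕ → OnePoint D | y i = (d : OnePoint D)} =
        (fun y : ℕ → OnePoint D => y i) ⁻¹' {(d : OnePoint D)} := rfl
    rw [heq]
    exact (isOpen_coe_singleton d).preimage (continuous_apply i)
  by_cases hxw : x = w
  · refine ⟨{y | y i = (d : OnePoint D)}, hopen, hxi, ?_⟩
    rintro p ⟨h1, h2⟩
    exact ⟨h1, by rwa [hxw] at h2⟩
  · refine ⟨{y | y i = (d : OnePoint D)} \ {w},
      IsOpen.sdiff hopen isClosed_singleton,
      ⟨hxi, hxw⟩, ?_⟩
    rintro p ⟨⟨h1, h1w⟩, h2⟩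
    refine ⟨h1, fun hpw => h1w ?_⟩
    rw [hpw]; rfl

/-- punctured neighborhood lower bound coming from continuity at `(z, false)`. -/
lemma punctured_bound
    (hemb : @Topology.IsEmbedding ((ℕ → OnePoint D) × Bool) (Γ → ℕ → unitInterval)
      (adTopology (ℕ → OnePoint D)) _ h)
    (z : ℕ → OnePoint D) (γ : Γ) (m : ℕ) (c : ℝ)
    (hc : c < ((h (z, false) γ m : unitInterval) : ℝ)) :
    ∃ V : ℕ → Set (OnePoint D), (∀ j, IsOpen (V j) ∧ z j ∈ V j) ∧
      ∀ y, (∀ j, y j ∈ V j) → y ≠ z → c < ((h (y, true) γ m : unitInterval) : ℝ) := by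
  letI : TopologicalSpace ((ℕ → OnePoint D) × Bool) := adTopology (ℕ → OnePoint D)
  have hcont : Continuous fun p : (ℕ → OnePoint D) × Bool => ((h p γ m : unitInterval) : ℝ) :=
    continuous_subtype_val.comp ((continuous_apply m).comp ((continuous_apply γ).comp
      hemb.continuous))
  have hO : IsOpen {p : (ℕ → OnePoint D) × Bool | c < ((h p γ m : unitInterval) : ℝ)} :=
    isOpen_Ioi.preimage hcont
  obtain ⟨U, hUopen, hzU, hUsub⟩ := (ad_isOpen_iff _).1 hO z hc
  obtain ⟨V, hV, hVsub⟩ := box_extract hUopen hzU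
  refine ⟨V, hV, fun y hy hyz => ?_⟩
  exact hUsub ⟨hVsub hy, by simp [hyz]⟩

end AuxNYV2
section AuxNYV3
open OnePoint
set_option linter.unusedSectionVars false
set_option maxHeartbeats 1000000

variable {D : Type} [TopologicalSpace D] [DiscreteTopology D] {Γ : Type}

/-- One stage of the recursive construction. -/
structure ADStage (D Γ : Type) where
  d : D
  g : Γ
  m : ℕ
  e : ℝ
  V : ℕ → Set (OnePoint D)

/-- the point of `(OnePoint D)^ω` determined by the first `n` stages -/
def upt (f : ℕ → ADStage D Γ) (n : ℕ) : ℕ → OnePoint D :=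
  fun j => if 1 ≤ j ∧ j ≤ n then ((f (j-1)).d : OnePoint D) else ∞

lemma upt_pos {f : ℕ → ADStage D Γ} {n j : ℕ} (h1 : 1 ≤ j) (h2 : j ≤ n) :
    upt f n j = ((f (j-1)).d : OnePoint D) := if_pos ⟨h1, h2⟩

lemma upt_neg {f : ℕ → ADStage D Γ} {n j : ℕ} (hj : ¬(1 ≤ j ∧ j ≤ n)) :
    upt f n j = ∞ := if_neg hj

lemma upt_congr {f f' : ℕ → ADStage D Γ} {n : ℕ} (hff : ∀ m < n, f m = f' m) :
    upt f n = upt f' n := by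
  funext j
  by_cases hj : 1 ≤ j ∧ j ≤ n
  · rw [upt_pos hj.1 hj.2, upt_pos hj.1 hj.2, hff (j-1) (by omega)]
  · rw [upt_neg hj, upt_neg hj]

variable (h : ((ℕ → OnePoint D) × Bool) → Γ → ℕ → unitInterval)

/-- correctness of the `k`-th stage (relative to the previous stages). -/
def StageOK (f : ℕ → ADStage D Γ) (k : ℕ) : Prop :=
  (∀ r < k, (((f k).d : OnePoint D)) ∈ (f r).V (k+1)) ∧
  (∀ r < k, (f k).g ≠ (f r).g) ∧
  0 < (f k).e ∧
  (∀ j, IsOpen ((f k).V j) ∧ upt f (k+1) j ∈ (f k).V j) ∧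
  (∀ y : ℕ → OnePoint D, (∀ j, y j ∈ (f k).V j) → y ≠ upt f (k+1) →
      (f k).e < ((h (y, true) (f k).g (f k).m : unitInterval) : ℝ))

lemma stageOK_congr {f f' : ℕ → ADStage D Γ} {k : ℕ} (hff : ∀ m ≤ k, f m = f' m)
    (hOK : StageOK h f k) : StageOK h f' k := by
  have hk : f k = f' k := hff k le_rfl
  have hup : upt f (k+1) = upt f' (k+1) := upt_congr (fun m hm => hff m (by omega))
  obtain ⟨hA, hB, hC, hDj, hE⟩ := hOK
  refine ⟨fun r hr => ?_, fun r hr => ?_, ?_, fun j => ?_, fun y hy hyne => ?_⟩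
  · rw [← hk, ← hff r hr.le]; exact hA r hr
  · rw [← hk, ← hff r hr.le]; exact hB r hr
  · rw [← hk]; exact hC
  · rw [← hk, ← hup]; exact hDj j
  · rw [← hk] at hy ⊢; rw [← hup] at hyne; exact hE y hy hyne

lemma uncountable_univ_D (hD : Cardinal.mk D = Cardinal.aleph 1) :
    ¬ (Set.univ : Set D).Countable := by
  intro hc
  have : Countable D := Set.countable_univ_iff.1 hc
  have hle : Cardinal.mk D ≤ Cardinal.aleph0 := Cardinal.mk_le_aleph0
  rw [hD] at hle
  exact absurd hle (not_le.2 Cardinal.aleph0_lt_aleph_one)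

lemma step_exists (hD : Cardinal.mk D = Cardinal.aleph 1)
    (hemb : @Topology.IsEmbedding ((ℕ → OnePoint D) × Bool) (Γ → ℕ → unitInterval)
      (adTopology (ℕ → OnePoint D)) _ h)
    (f : ℕ → ADStage D Γ) (k : ℕ) (hprev : ∀ l < k, StageOK h f l) :
    ∃ st : ADStage D Γ, StageOK h (Function.update f k st) k := by
  classical
  letI : TopologicalSpace ((ℕ → OnePoint D) × Bool) := adTopology (ℕ → OnePoint D)
  set u := upt f k with hu
  -- Claim A : one may modify coordinate `k+1` so as to pick up a fresh support coordinate
  have key : ∃ dd : D, (∀ r < k, ((dd : OnePoint D)) ∈ (f r).V (k+1)) ∧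
      ∃ γ, h (Function.update u (k+1) (dd : OnePoint D), false) γ ≠ 0 ∧
        ∀ r < k, γ ≠ (f r).g := by
    by_contra hcon
    push_neg at hcon
    set Good : Set D := {dd | ∀ r < k, ((dd : OnePoint D)) ∈ (f r).V (k+1)} with hGood
    have hVrprop : ∀ r, r < k → IsOpen ((f r).V (k+1)) ∧ (∞ : OnePoint D) ∈ (f r).V (k+1) := by
      intro r hr
      have hD4 := (hprev r hr).2.2.2.1 (k+1)
      refine ⟨hD4.1, ?_⟩
      have h2 := hD4.2
      have heq : upt f (r+1) (k+1) = ∞ := upt_neg (by omega)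
      rwa [heq] at h2
    have hGoodCompl : Goodᶜ.Countable := by
      have hsub : Goodᶜ ⊆ ⋃ r ∈ Set.Iio k, {dd : D | ((dd : OnePoint D)) ∉ (f r).V (k+1)} := by
        intro dd hdd
        simp only [hGood, Set.mem_compl_iff, Set.mem_setOf_eq, not_forall] at hdd
        obtain ⟨r, hr, hmem⟩ := hdd
        exact Set.mem_biUnion hr hmem
      refine Set.Countable.mono hsub ?_
      refine Set.Countable.biUnion ((Set.finite_Iio k).countable) ?_
      intro r hr
      exact (finite_not_mem_of_isOpen_infty (hVrprop r hr).1 (hVrprop r hr).2).countable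
    set Ps : Set Γ := (fun r => (f r).g) '' (Set.Iio k) with hPsdef
    have hPs : Ps.Finite := (Set.finite_Iio k).image _
    set x : Good → ℕ → OnePoint D :=
      fun dd => Function.update u (k+1) (((dd : D) : OnePoint D)) with hx
    have hxval : ∀ dd : Good, x dd (k+1) = (((dd : D)) : OnePoint D) := by
      intro dd; simp [hx]
    set v : Good → Γ → ℕ → unitInterval := fun dd => h (x dd, false) with hv
    have hT : ∀ dd : Good, ∃ W : Set (Γ → ℕ → unitInterval), IsOpen W ∧
        h ⁻¹' W = {p : (ℕ → OnePoint D) × Bool |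
          p.1 (k+1) = (((dd : D)) : OnePoint D) ∧ p ≠ (x dd, true)} := by
      intro dd
      exact hemb.toIsInducing.isOpen_iff.1 (ad_isOpen_eval_ne (k+1) (dd : D) (x dd))
    choose W hWopen hWpre using hT
    have hcnt : Countable ↥Good := by
      refine countable_of_separated_family hPs v W hWopen ?_ ?_ ?_
      · intro i
        have : (x i, false) ∈ h ⁻¹' (W i) := by
          rw [hWpre i]
          exact ⟨hxval i, by simp⟩
        exact this
      · intro i e hve
        have : (x e, false) ∈ h ⁻¹' (W i) := hve
        rw [hWpre i] at this
        have hxe : x e (k+1) = (((i : D)) : OnePoint D) := this.1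
        rw [hxval e] at hxe
        exact Subtype.ext (OnePoint.coe_injective hxe)
      · intro i γ hγ
        by_contra hne
        obtain ⟨r, hrk, hγr⟩ := hcon (i : D) i.2 γ hne
        exact hγ ⟨r, hrk, hγr.symm⟩
    have : (Set.univ : Set D).Countable := by
      have hg : Good.Countable := Set.countable_coe_iff.1 hcnt
      have := hg.union hGoodCompl
      rwa [Set.union_compl_self] at this
    exact uncountable_univ_D hD this
  obtain ⟨dd, hdd, γk, hγne, hγfresh⟩ := key
  set xp := Function.update u (k+1) ((dd : OnePoint D)) with hxp
  have hm : ∃ m, h (xp, false) γk m ≠ 0 := by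
    by_contra hc; push_neg at hc; exact hγne (funext hc)
  obtain ⟨mk, hmk⟩ := hm
  have hval : 0 < ((h (xp, false) γk mk : unitInterval) : ℝ) := by
    rcases lt_or_eq_of_le (h (xp, false) γk mk).2.1 with hlt | heq
    · exact hlt
    · exact absurd (Subtype.ext heq.symm) hmk
  set c := ((h (xp, false) γk mk : unitInterval) : ℝ) / 2 with hcdef
  have hchalf : c < ((h (xp, false) γk mk : unitInterval) : ℝ) := half_lt_self hval
  have hcpos : 0 < c := half_pos hval
  obtain ⟨V, hV, hQ⟩ := punctured_bound hemb xp γk mk c hchalf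
  refine ⟨⟨dd, γk, mk, c, V⟩, ?_⟩
  set st : ADStage D Γ := ⟨dd, γk, mk, c, V⟩ with hst
  set f' := Function.update f k st with hf'
  have hf'k : f' k = st := Function.update_self k st f
  have hf'ne : ∀ m, m ≠ k → f' m = f m := fun m hm => Function.update_of_ne hm st f
  have hupt : upt f' (k+1) = xp := by
    funext j
    by_cases hj : 1 ≤ j ∧ j ≤ k+1
    · by_cases hjk : j = k+1
      · subst hjk
        rw [upt_pos hj.1 hj.2]
        have h1 : (k+1) - 1 = k := by omega
        rw [h1, hf'k]
        rw [hxp, Function.update_self]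
      · have hjk' : j ≤ k := by omega
        rw [upt_pos hj.1 hj.2, hf'ne (j-1) (by omega)]
        rw [hxp, Function.update_of_ne hjk, hu, upt_pos hj.1 hjk']
    · have hjk : j ≠ k+1 := fun hh => hj (by omega)
      have hj' : ¬(1 ≤ j ∧ j ≤ k) := fun hh => hj ⟨hh.1, by omega⟩
      rw [upt_neg hj, hxp, Function.update_of_ne hjk, hu, upt_neg hj']
  refine ⟨fun r hr => ?_, fun r hr => ?_, ?_, fun j => ?_, fun y hy hyne => ?_⟩
  · rw [hf'k, hf'ne r (by omega)]
    exact hdd r hr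
  · rw [hf'k, hf'ne r (by omega)]
    exact hγfresh r hr
  · rw [hf'k]; exact hcpos
  · rw [hf'k, hupt]
    exact hV j
  · rw [hf'k] at hy ⊢
    rw [hupt] at hyne
    exact hQ y hy hyne

end AuxNYV3
section AuxNYV4
open OnePoint
set_option linter.unusedSectionVars false
set_option maxHeartbeats 1000000

variable {D : Type} [TopologicalSpace D] [DiscreteTopology D] {Γ : Type}
variable {h : ((ℕ → OnePoint D) × Bool) → Γ → ℕ → unitInterval}

lemma exists_chain (hD : Cardinal.mk D = Cardinal.aleph 1)
    (hemb : @Topology.IsEmbedding ((ℕ → OnePoint D) × Bool) (Γ → ℕ → unitInterval)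
      (adTopology (ℕ → OnePoint D)) _ h)
    (d0 : D) (γ0 : Γ) :
    ∃ f : ℕ → ADStage D Γ, ∀ k, StageOK h f k := by
  classical
  have hstep : ∀ (f : ℕ → ADStage D Γ) (k : ℕ),
      ∃ st, (∀ l < k, StageOK h f l) → StageOK h (Function.update f k st) k := by
    intro f k
    by_cases hp : ∀ l < k, StageOK h f l
    · obtain ⟨st, hst⟩ := step_exists h hD hemb f k hp
      exact ⟨st, fun _ => hst⟩
    · exact ⟨f k, fun hcon => absurd hcon hp⟩
  choose stf hstf using hstep
  let base : ℕ → ADStage D Γ := fun _ => ⟨d0, γ0, 0, 0, fun _ => Set.univ⟩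
  let G : ℕ → (ℕ → ADStage D Γ) :=
    fun n => Nat.rec base (fun k g => Function.update g k (stf g k)) n
  have hGsucc : ∀ k, G (k+1) = Function.update (G k) k (stf (G k) k) := fun k => rfl
  have hGnoteq : ∀ k m, m ≠ k → G (k+1) m = G k m := by
    intro k m hm
    rw [hGsucc k]
    exact Function.update_of_ne hm _ _
  have hGagree : ∀ k m, m < k → G k m = G (m+1) m := by
    intro k
    induction k with
    | zero => intro m hm; omega
    | succ k ih =>
      intro m hm
      rcases Nat.lt_succ_iff_lt_or_eq.1 hm with hmk | hmk
      · rw [hGnoteq k m (by omega)]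
        exact ih m hmk
      · subst hmk; rfl
  have hGOK : ∀ k, ∀ l < k, StageOK h (G k) l := by
    intro k
    induction k with
    | zero => intro l hl; omega
    | succ k ih =>
      intro l hl
      rcases Nat.lt_succ_iff_lt_or_eq.1 hl with hlk | hlk
      · refine stageOK_congr h (f := G k) (fun m hm => ?_) (ih l hlk)
        exact (hGnoteq k m (by omega)).symm
      · subst hlk
        rw [hGsucc l]
        exact hstf (G l) l ih
  refine ⟨fun m => G (m+1) m, fun k => ?_⟩
  refine stageOK_congr h (f := G (k+1)) (fun m hm => ?_) (hGOK (k+1) k (Nat.lt_succ_self k))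
  exact hGagree (k+1) m (by omega)

lemma the_contradiction (hD : Cardinal.mk D = Cardinal.aleph 1)
    (hemb : @Topology.IsEmbedding ((ℕ → OnePoint D) × Bool) (Γ → ℕ → unitInterval)
      (adTopology (ℕ → OnePoint D)) _ h)
    (hdense : Set.range h ⊆ closure (Set.range h ∩ {x | {γ | x γ ≠ 0}.Finite})) :
    False := by
  classical
  letI : TopologicalSpace ((ℕ → OnePoint D) × Bool) := adTopology (ℕ → OnePoint D)
  have hD0 : Nonempty D := by
    by_contra hno
    have : Cardinal.mk D = 0 := by
      rw [Cardinal.mk_eq_zero_iff]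
      simpa using hno
    rw [hD] at this
    have h01 : (0 : Cardinal) < Cardinal.aleph 1 :=
      lt_of_le_of_lt zero_le Cardinal.aleph0_lt_aleph_one
    exact absurd this.symm (ne_of_lt h01)
  obtain ⟨d0⟩ := hD0
  have hΓ0 : Nonempty Γ := by
    by_contra hno
    have hEmpty : IsEmpty Γ := not_nonempty_iff.1 hno
    have : h (fun _ => (∞ : OnePoint D), false) = h (fun _ => (∞ : OnePoint D), true) :=
      funext fun γ => hEmpty.elim γ
    have := hemb.injective this
    simpa using congrArg Prod.snd this
  obtain ⟨γ0⟩ := hΓ0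
  obtain ⟨f, hf⟩ := exists_chain hD hemb d0 γ0
  set z : ℕ → OnePoint D := fun j => if 1 ≤ j then ((f (j-1)).d : OnePoint D) else ∞ with hz
  have hz0 : z 0 = ∞ := by simp [hz]
  have hzpos : ∀ j, 1 ≤ j → z j = ((f (j-1)).d : OnePoint D) := by
    intro j hj; simp [hz, hj]
  -- u n ≠ z
  have hune : ∀ n, upt f n ≠ z := by
    intro n hEq
    have := congrFun hEq (n+1)
    rw [upt_neg (by omega), hzpos (n+1) (by omega)] at this
    exact OnePoint.infty_ne_coe _ this
  -- u n → z in the product space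
  have htend : Filter.Tendsto (fun n => upt f n) Filter.atTop (nhds z) := by
    rw [tendsto_pi_nhds]
    intro j
    refine Filter.Tendsto.congr' ?_ (tendsto_const_nhds (x := z j))
    refine Filter.eventually_atTop.2 ⟨j, fun n hn => ?_⟩
    show z j = upt f n j
    by_cases hj : 1 ≤ j
    · rw [hzpos j hj, upt_pos hj hn]
    · have hj0 : j = 0 := by omega
      subst hj0
      rw [hz0, upt_neg (by omega)]
  -- (u n, true) → (z, false) in the duplicate
  have htend2 : Filter.Tendsto (fun n => (upt f n, true))
      Filter.atTop (nhds ((z, false) : (ℕ → OnePoint D) × Bool)) := by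
    rw [tendsto_nhds]
    intro s hs hzs
    obtain ⟨U, hUopen, hzU, hUsub⟩ := (ad_isOpen_iff s).1 hs z hzs
    have hev : ∀ᶠ n in Filter.atTop, upt f n ∈ U :=
      htend (hUopen.mem_nhds hzU)
    refine hev.mono (fun n hn => hUsub ⟨hn, ?_⟩)
    intro hEq
    exact hune n (congrArg Prod.fst hEq)
  -- box membership for n ≥ l+2
  have hbox : ∀ l n, l + 2 ≤ n → ∀ j, upt f n j ∈ (f l).V j := by
    intro l n hn j
    by_cases hj : 1 ≤ j ∧ j ≤ n
    · rcases le_or_gt j (l+1) with hj2 | hj2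
      · have he : upt f n j = upt f (l+1) j := by
          rw [upt_pos hj.1 hj.2, upt_pos hj.1 hj2]
        rw [he]
        exact ((hf l).2.2.2.1 j).2
      · have he : upt f n j = ((f (j-1)).d : OnePoint D) := upt_pos hj.1 hj.2
        rw [he]
        have := (hf (j-1)).1 l (by omega)
        have hjj : (j-1) + 1 = j := by omega
        rwa [hjj] at this
    · rw [upt_neg hj]
      have hju : ¬(1 ≤ j ∧ j ≤ l+1) := by
        intro hh
        exact hj ⟨hh.1, by omega⟩
      have := ((hf l).2.2.2.1 j).2
      rwa [upt_neg hju] at this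
  -- u n ≠ u (l+1) for n ≥ l+2
  have hne2 : ∀ l n, l + 2 ≤ n → upt f n ≠ upt f (l+1) := by
    intro l n hn hEq
    have := congrFun hEq (l+2)
    rw [upt_pos (by omega) (by omega), upt_neg (by omega)] at this
    exact OnePoint.coe_ne_infty _ this
  -- the uniform lower bound along the sequence
  have hbound : ∀ l n, l + 2 ≤ n →
      (f l).e < ((h (upt f n, true) (f l).g (f l).m : unitInterval) : ℝ) := by
    intro l n hn
    exact (hf l).2.2.2.2 (upt f n) (hbox l n hn) (hne2 l n hn)
  -- pass to the limit
  have hlim : ∀ l, (f l).e ≤ ((h (z, false) (f l).g (f l).m : unitInterval) : ℝ) := by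
    intro l
    have hcont : Continuous fun p : (ℕ → OnePoint D) × Bool =>
        ((h p (f l).g (f l).m : unitInterval) : ℝ) :=
      continuous_subtype_val.comp ((continuous_apply (f l).m).comp
        ((continuous_apply (f l).g).comp hemb.continuous))
    have ht : Filter.Tendsto (fun n => ((h (upt f n, true) (f l).g (f l).m : unitInterval) : ℝ))
        Filter.atTop (nhds ((h (z, false) (f l).g (f l).m : unitInterval) : ℝ)) :=
      (hcont.tendsto _).comp htend2
    exact ge_of_tendsto ht (Filter.eventually_atTop.2 ⟨l+2, fun n hn => (hbound l n hn).le⟩)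
  -- z has infinite support
  have hzsupp : ∀ l, h (z, false) (f l).g ≠ 0 := by
    intro l h0
    have := hlim l
    rw [h0] at this
    simp only [Pi.zero_apply] at this
    have := lt_of_lt_of_le (hf l).2.2.1 this
    norm_num at this
  have hginj : Function.Injective fun l => (f l).g := by
    intro a b hab
    by_contra hne
    rcases Nat.lt_or_ge a b with hlt | hge
    · exact (hf b).2.1 a hlt hab.symm
    · have hlt : b < a := by omega
      exact (hf a).2.1 b hlt hab
  have hinf : {γ | h (z, false) γ ≠ 0}.Infinite :=
    Set.infinite_of_injective_forall_mem hginj hzsupp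
  -- final step: a single modification of `z` at coordinate 0 kills everything
  have hpos : ∀ l, ∃ m', 0 < ((h (z, false) (f l).g m' : unitInterval) : ℝ) := by
    intro l
    have := hzsupp l
    rw [Function.ne_iff] at this
    obtain ⟨m', hm'⟩ := this
    rcases lt_or_eq_of_le (h (z, false) (f l).g m').2.1 with hlt | heq
    · exact ⟨m', hlt⟩
    · exact absurd (Subtype.ext heq.symm) hm'
  choose ml hml using hpos
  have hpb : ∀ l, ∃ V : ℕ → Set (OnePoint D), (∀ j, IsOpen (V j) ∧ z j ∈ V j) ∧
      ∀ y, (∀ j, y j ∈ V j) → y ≠ z → 0 < ((h (y, true) (f l).g (ml l) : unitInterval) : ℝ) :=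
    fun l => punctured_bound hemb z ((f l).g) (ml l) 0 (hml l)
  choose Vl hVl hQl using hpb
  have hBadCnt : (⋃ l, {e : D | ((e : OnePoint D)) ∉ Vl l 0}).Countable := by
    refine Set.countable_iUnion (fun l => ?_)
    have h1 := (hVl l 0).1
    have h2 := (hVl l 0).2
    rw [hz0] at h2
    exact (finite_not_mem_of_isOpen_infty h1 h2).countable
  have hdex : ∃ dstar : D, dstar ∉ ⋃ l, {e : D | ((e : OnePoint D)) ∉ Vl l 0} := by
    by_contra hno
    push_neg at hno
    refine uncountable_univ_D hD (Set.Countable.mono ?_ hBadCnt)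
    intro e _
    exact hno e
  obtain ⟨dstar, hdstar⟩ := hdex
  set y : ℕ → OnePoint D := Function.update z 0 ((dstar : OnePoint D)) with hy
  have hyz : y ≠ z := by
    intro hEq
    have := congrFun hEq 0
    rw [hy, Function.update_self, hz0] at this
    exact OnePoint.coe_ne_infty _ this
  have hybox : ∀ l j, y j ∈ Vl l j := by
    intro l j
    by_cases hj : j = 0
    · subst hj
      rw [hy, Function.update_self]
      by_contra hmem
      exact hdstar (Set.mem_iUnion.2 ⟨l, hmem⟩)
    · rw [hy, Function.update_of_ne hj]
      exact (hVl l j).2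
  have hysupp : ∀ l, h (y, true) (f l).g ≠ 0 := by
    intro l h0
    have := hQl l y (hybox l) hyz
    rw [h0] at this
    simp only [Pi.zero_apply] at this
    norm_num at this
  have hyinf : {γ | h (y, true) γ ≠ 0}.Infinite :=
    Set.infinite_of_injective_forall_mem hginj hysupp
  exact hyinf (isolated_finite_supp hemb hdense y)

end AuxNYV4

/-- the Alexandroff duplicate of `A(ω₁)^ω` is not NY-Valdivia. -/
theorem AD_AOmegaOnePowOmega_not_NYValdivia
    (D : Type) [TopologicalSpace D] [DiscreteTopology D]
    (hD : Cardinal.mk D = Cardinal.aleph 1) :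
    ¬ @NYValdivia ((ℕ → OnePoint D) × Bool) (adTopology (ℕ → OnePoint D)) := by
  rintro ⟨Γ, h, hemb, hdense⟩
  exact the_contradiction hD hemb hdense
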